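/- Let $\Omega$ be a commutative semigroup and $(A, \bullet_{\alpha,\beta}, p_\alpha, q_\alpha)_{\alpha,\beta\in\Omega}$ a BiHom-$\Omega$-associative algebra with $p_\alpha, q_\alpha$ bijective. Define $\{x,y\}_{\alpha,\beta} := x\bullet_{\alpha,\beta}y - p_\beta^{-1}q_\beta(y)\bullet_{\beta,\alpha}p_\alpha q_\alpha^{-1}(x)$. Then $(A, \{\cdot,\cdot\}_{\alpha,\beta}, p_\alpha, q_\alpha)_{\alpha,\beta\in\Omega}$ is a BiHom-$\Omega$-Lie algebra. -/
import Mathlib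


/-- The commutator of a BiHom-Ω-associative algebra with bijective structure maps
is a BiHom-Ω-Lie algebra. -/
theorem stmt_12
    {K : Type*} [Field K] {Ω : Type*} [CommSemigroup Ω]
    {A : Type*} [AddCommGroup A] [Module K A]
    (mul : Ω → Ω → A →ₗ[K] A →ₗ[K] A)
    (p q : Ω → A →ₗ[K] A)
    -- (A, mul, p, q) is a BiHom-Ω-associative algebra
    (hp : ∀ (α β : Ω) (x y : A), p (α * β) (mul α β x y) = mul α β (p α x) (p β y))
    (hq : ∀ (α β : Ω) (x y : A), q (α * β) (mul α β x y) = mul α β (q α x) (q β y))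
    (hpq : ∀ (α : Ω) (x : A), p α (q α x) = q α (p α x))
    (hassoc : ∀ (α β γ : Ω) (x y z : A),
      mul α (β * γ) (p α x) (mul β γ y z) = mul (α * β) γ (mul α β x y) (q γ z))
    -- p, q are bijective, with inverses pinv, qinv
    (pinv qinv : Ω → A → A)
    (hpinv1 : ∀ (α : Ω) (x : A), p α (pinv α x) = x)
    (hpinv2 : ∀ (α : Ω) (x : A), pinv α (p α x) = x)
    (hqinv1 : ∀ (α : Ω) (x : A), q α (qinv α x) = x)
    (hqinv2 : ∀ (α : Ω) (x : A), qinv α (q α x) = x)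
    -- the commutator bracket
    (cbr : Ω → Ω → A → A → A)
    (hcbr : ∀ (α β : Ω) (x y : A),
      cbr α β x y = mul α β x y - mul β α (pinv β (q β y)) (p α (qinv α x))) :
    -- (A, cbr, p, q) is a BiHom-Ω-Lie algebra
    (∀ (α β : Ω) (x y : A), p (α * β) (cbr α β x y) = cbr α β (p α x) (p β y)) ∧
    (∀ (α β : Ω) (x y : A), q (α * β) (cbr α β x y) = cbr α β (q α x) (q β y)) ∧
    (∀ (α β : Ω) (x y : A), cbr α β (q α x) (p β y) = - cbr β α (q β y) (p α x)) ∧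
    (∀ (α β γ : Ω) (x y z : A),
      cbr α (β * γ) (q α (q α x)) (cbr β γ (q β y) (p γ z))
        + cbr β (γ * α) (q β (q β y)) (cbr γ α (q γ z) (p α x))
        + cbr γ (α * β) (q γ (q γ z)) (cbr α β (q α x) (p β y)) = 0) := by
  -- p is injective
  have hπ : ∀ (α : Ω), Function.Injective (p α) := by
    intro α u v h
    have := congrArg (pinv α) h
    rwa [hpinv2, hpinv2] at this
  have hpinv_sub : ∀ (α : Ω) (u v : A), pinv α (u - v) = pinv α u - pinv α v := by
    intro α u v
    apply hπ α
    rw [hpinv1, map_sub, hpinv1, hpinv1]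
  have hpqinv : ∀ (α : Ω) (x : A), p α (qinv α x) = qinv α (p α x) := by
    intro α x
    have h : q α (p α (qinv α x)) = p α x := by rw [← hpq, hqinv1]
    calc p α (qinv α x) = qinv α (q α (p α (qinv α x))) := (hqinv2 _ _).symm
      _ = qinv α (p α x) := by rw [h]
  have hqpinv : ∀ (α : Ω) (x : A), q α (pinv α x) = pinv α (q α x) := by
    intro α x
    have h : p α (q α (pinv α x)) = q α x := by rw [hpq, hpinv1]
    calc q α (pinv α x) = pinv α (p α (q α (pinv α x))) := (hpinv2 _ _).symm
      _ = pinv α (q α x) := by rw [h]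
  have simpq : ∀ (α : Ω) (x : A), pinv α (q α (p α x)) = q α x := by
    intro α x
    rw [← hpq, hpinv2]
  have hpinvmul : ∀ (α β : Ω) (x y : A),
      pinv (α*β) (mul α β x y) = mul α β (pinv α x) (pinv β y) := by
    intro α β x y
    have h := hp α β (pinv α x) (pinv β y)
    rw [hpinv1, hpinv1] at h
    rw [← h, hpinv2]
  have hp' : ∀ (α β : Ω) (x y : A),
      p (α*β) (mul β α x y) = mul β α (p β x) (p α y) := by
    intro α β x y; rw [mul_comm α β]; exact hp β α x y
  have hq' : ∀ (α β : Ω) (x y : A),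
      q (α*β) (mul β α x y) = mul β α (q β x) (q α y) := by
    intro α β x y; rw [mul_comm α β]; exact hq β α x y
  have hpinvmul' : ∀ (α β : Ω) (x y : A),
      pinv (α*β) (mul β α x y) = mul β α (pinv β x) (pinv α y) := by
    intro α β x y; rw [mul_comm α β]; exact hpinvmul β α x y
  have hcomm : ∀ (α β γ : Ω) (x y : A), mul (α*β) γ x y = mul (β*α) γ x y := by
    intro α β γ x y; rw [mul_comm α β]
  have cbrqp : ∀ (α β : Ω) (x y : A),
      cbr α β (q α x) (p β y) = mul α β (q α x) (p β y) - mul β α (q β y) (p α x) := by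
    intro α β x y
    rw [hcbr, simpq, hqinv2]
  have key : ∀ (α β γ : Ω) (x y z : A),
      mul α (β*γ) (q α (q α x)) (mul β γ y z)
        = mul (α*β) γ (mul α β (pinv α (q α (q α x))) y) (q γ z) := by
    intro α β γ x y z
    conv_lhs => rw [← hpinv1 α (q α (q α x))]
    rw [hassoc]
  have key2 : ∀ (α β γ : Ω) (x y z : A),
      mul α (β*γ) (q α (q α x)) (mul γ β y z)
        = mul (α*γ) β (mul α γ (pinv α (q α (q α x))) y) (q β z) := by
    intro α β γ x y z
    rw [mul_comm β γ]; exact key α γ β x y z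
  have hT : ∀ (α β γ : Ω) (x y z : A),
      cbr α (β*γ) (q α (q α x)) (cbr β γ (q β y) (p γ z))
        = mul (α*β) γ (mul α β (pinv α (q α (q α x))) (q β y)) (q γ (p γ z))
          - mul (α*γ) β (mul α γ (pinv α (q α (q α x))) (q γ z)) (q β (p β y))
          - mul (β*γ) α (mul β γ (pinv β (q β (q β y))) (q γ z)) (q α (p α x))
          + mul (γ*β) α (mul γ β (pinv γ (q γ (q γ z))) (q β y)) (q α (p α x)) := by
    intro α β γ x y z
    rw [cbrqp β γ y z, hcbr]
    rw [map_sub (q (β*γ)), hq, hq', hpinv_sub, hpinvmul, hpinvmul', simpq, simpq,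
      hqinv2, hpq α x]
    simp only [map_sub, LinearMap.sub_apply]
    rw [key α β γ x (q β y) (p γ z), key2 α β γ x (q γ z) (p β y),
      hcomm β γ α (mul γ β (pinv γ (q γ (q γ z))) (q β y)) (q α (p α x))]
    abel
  refine ⟨?_, ?_, ?_, ?_⟩
  · intro α β x y
    rw [hcbr, hcbr, map_sub, hp, hp', hpinv1, simpq, ← hpqinv]
  · intro α β x y
    rw [hcbr, hcbr, map_sub, hq, hq', hqpinv, hqinv2, ← hpq, hqinv1]
  · intro α β x y
    rw [cbrqp, cbrqp]
    abel
  · intro α β γ x y z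
    rw [hT α β γ x y z, hT β γ α y z x, hT γ α β z x y]
    abel
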